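/- For i = 1, 2, let B_i be a finite-dimensional simple ℚ-algebra whose center K_i is a field (hence a number field), and suppose dim_{K_1} B_1 = dim_{K_2} B_2 = m^2 for some positive integer m. If φ : B_1 → B_2 is an injective ℚ-algebra homomorphism, then φ maps the center of B_1 into the center of B_2, i.e., φ(K_1) ⊆ K_2. -/

import Mathlib

/-- In a simple ring, any nonzero element generates the whole ring as a two-sided ideal:
`1` is a finite sum of terms `a * x * d`. -/
lemma exists_sum_mul_mul_eq_one {S : Type*} [Ring S] [IsSimpleRing S] {x : S} (hx : x ≠ 0) :
    ∃ s : Multiset (S × S), (s.map fun p => p.1 * x * p.2).sum = 1 := by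
  classical
  set carrier : Set S := {y | ∃ s : Multiset (S × S), (s.map fun p => p.1 * x * p.2).sum = y}
    with hc
  have hzero : (0 : S) ∈ carrier := ⟨0, by simp⟩
  have hadd : ∀ {a b : S}, a ∈ carrier → b ∈ carrier → a + b ∈ carrier := by
    rintro a b ⟨s, rfl⟩ ⟨t, rfl⟩
    exact ⟨s + t, by simp⟩
  have hneg : ∀ {a : S}, a ∈ carrier → -a ∈ carrier := by
    rintro a ⟨s, rfl⟩
    refine ⟨s.map fun p => (-p.1, p.2), ?_⟩
    rw [Multiset.map_map, ← Multiset.sum_map_neg', Multiset.map_map]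
    exact congrArg _ (Multiset.map_congr rfl fun p _ => by simp)
  have hmull : ∀ {a b : S}, b ∈ carrier → a * b ∈ carrier := by
    rintro a b ⟨s, rfl⟩
    refine ⟨s.map fun p => (a * p.1, p.2), ?_⟩
    rw [Multiset.map_map, ← Multiset.sum_map_mul_left]
    exact congrArg _ (Multiset.map_congr rfl fun p _ => by simp [mul_assoc])
  have hmulr : ∀ {a b : S}, a ∈ carrier → a * b ∈ carrier := by
    rintro a b ⟨s, rfl⟩
    refine ⟨s.map fun p => (p.1, p.2 * b), ?_⟩
    rw [Multiset.map_map, ← Multiset.sum_map_mul_right]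
    exact congrArg _ (Multiset.map_congr rfl fun p _ => by simp [mul_assoc])
  let I : TwoSidedIdeal S := TwoSidedIdeal.mk' carrier hzero hadd hneg hmull hmulr
  have hxI : x ∈ I := by
    rw [TwoSidedIdeal.mem_mk']
    exact ⟨{(1, 1)}, by simp⟩
  have h1 : (1 : S) ∈ I := IsSimpleRing.one_mem_of_ne_zero_mem I hx hxI
  rwa [TwoSidedIdeal.mem_mk'] at h1

/-- **Key lemma**: in a ring `R`, if `ψ : S → R` is a ring hom from a simple ring `S`
whose center is the field `K` (via `ι`), and `(l j)` is a family of elements of `R`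
commuting with the image of `ψ` which is "linearly independent over `K` via `ψ ∘ ι`",
then the `l j` are left-linearly independent over the image of `ψ`. -/
lemma key_indep {K S R J : Type*} [Field K] [Ring S] [IsSimpleRing S] [Ring R]
    (ι : K →+* S) (hcent : ∀ x : S, (∀ y, y * x = x * y) → ∃ z, x = ι z)
    (ψ : S →+* R) (l : J → R) (hc : ∀ (s : S) (j : J), Commute (ψ s) (l j))
    (hind : ∀ z : J →₀ K, (z.sum fun j zj => ψ (ι zj) * l j) = 0 → z = 0) :
    ∀ g : J →₀ S, (g.sum fun j s => ψ s * l j) = 0 → g = 0 := by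
  classical
  let F : (J →₀ S) →+ R :=
    Finsupp.liftAddHom fun j => (AddMonoidHom.mulRight (l j)).comp ψ.toAddMonoidHom
  have hF : ∀ g : J →₀ S, F g = g.sum fun j s => ψ s * l j := fun _ => rfl
  have hFl : ∀ (s : S) (g : J →₀ S), F (g.mapRange (s * ·) (mul_zero s)) = ψ s * F g := by
    intro s g
    rw [hF, Finsupp.sum_mapRange_index (by simp), hF, Finsupp.mul_sum]
    exact Finsupp.sum_congr fun j _ => by rw [map_mul, mul_assoc]
  have hFr : ∀ (s : S) (g : J →₀ S), F (g.mapRange (· * s) (zero_mul s)) = F g * ψ s := by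
    intro s g
    rw [hF, Finsupp.sum_mapRange_index (by simp), hF, Finsupp.sum_mul]
    exact Finsupp.sum_congr fun j _ => by
      rw [map_mul, mul_assoc, (hc s j).eq, ← mul_assoc]
  suffices H : ∀ n (g : J →₀ S), g.support.card = n → F g = 0 → g = 0 by
    intro g hg; exact H _ g rfl hg
  intro n
  induction n using Nat.strong_induction_on with
  | _ n IH =>
    intro g hcard hFg
    by_contra hgne
    obtain ⟨j₁, hj₁⟩ := Finsupp.support_nonempty_iff.mpr hgne
    have hgj₁ : g j₁ ≠ 0 := Finsupp.mem_support_iff.mp hj₁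
    obtain ⟨s, hs⟩ := exists_sum_mul_mul_eq_one hgj₁
    set g₁ : J →₀ S :=
      (s.map fun p => g.mapRange (fun y => p.1 * y * p.2) (by simp)).sum with hg₁def
    have hg₁app : ∀ j, g₁ j = (s.map fun p => p.1 * g j * p.2).sum := by
      intro j
      have := (Finsupp.applyAddHom (M := S) j).map_multiset_sum
        (s.map fun p => g.mapRange (fun y => p.1 * y * p.2) (by simp))
      rw [hg₁def]
      rw [show ((s.map fun p => g.mapRange (fun y => p.1 * y * p.2) (by simp)).sum) j
        = _ from this]
      rw [Multiset.map_map]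
      exact congrArg _ (Multiset.map_congr rfl fun p _ => by
        simp [Finsupp.mapRange_apply])
    have hg₁j₁ : g₁ j₁ = 1 := by rw [hg₁app]; exact hs
    have hsupp₁ : g₁.support ⊆ g.support := by
      intro j hj
      rw [Finsupp.mem_support_iff] at hj ⊢
      contrapose! hj
      rw [hg₁app, hj]
      rw [Multiset.sum_eq_zero]
      intro x hx
      obtain ⟨p, _, rfl⟩ := Multiset.mem_map.mp hx
      simp
    have hFg₁ : F g₁ = 0 := by
      rw [hg₁def, map_multiset_sum, Multiset.map_map]
      apply Multiset.sum_eq_zero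
      intro x hx
      obtain ⟨p, _, rfl⟩ := Multiset.mem_map.mp hx
      have hsplit : g.mapRange (fun y => p.1 * y * p.2) (by simp)
          = (g.mapRange (· * p.2) (zero_mul p.2)).mapRange (p.1 * ·) (mul_zero p.1) :=
        Finsupp.ext fun j => by simp [Finsupp.mapRange_apply, mul_assoc]
      show F (g.mapRange (fun y => p.1 * y * p.2) (by simp)) = 0
      rw [hsplit, hFl, hFr, hFg, zero_mul, mul_zero]
    by_cases hA : ∀ j, ∀ y : S, y * g₁ j = g₁ j * y
    · -- all values of g₁ are central, hence of the form ι z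
      have hz : ∀ j, ∃ z : K, g₁ j = ι z := fun j => hcent _ (hA j)
      have hι : Function.Injective ι := ι.injective
      let zf : J → K := fun j => Classical.choose (hz j)
      have hzf : ∀ j, g₁ j = ι (zf j) := fun j => Classical.choose_spec (hz j)
      let z : J →₀ K := Finsupp.onFinset g₁.support zf (by
        intro j hj
        rw [Finsupp.mem_support_iff]
        intro h0
        exact hj (hι (by rw [← hzf j, h0, map_zero])))
      have hzsum : (z.sum fun j zj => ψ (ι zj) * l j) = 0 := by
        rw [Finsupp.sum_of_support_subset z
          (Finsupp.support_onFinset_subset) (fun j zj => ψ (ι zj) * l j)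
          (fun j _ => by simp)]
        rw [← hFg₁, hF, Finsupp.sum]
        exact Finset.sum_congr rfl fun j _ => by
          rw [show z j = zf j from rfl, ← hzf j]
      have hz0 := hind z hzsum
      have : g₁ j₁ = 0 := by
        rw [hzf j₁, show zf j₁ = z j₁ from rfl, hz0]
        simp
      rw [hg₁j₁] at this
      exact one_ne_zero this
    · push_neg at hA
      obtain ⟨j₂, y, hy⟩ := hA
      set g₂ : J →₀ S :=
        g₁.mapRange (y * ·) (mul_zero y) - g₁.mapRange (· * y) (zero_mul y) with hg₂def
      have hg₂app : ∀ j, g₂ j = y * g₁ j - g₁ j * y := fun j => by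
        rw [hg₂def, Finsupp.sub_apply, Finsupp.mapRange_apply, Finsupp.mapRange_apply]
      have hFg₂ : F g₂ = 0 := by
        rw [hg₂def, map_sub, hFl, hFr, hFg₁, mul_zero, zero_mul, sub_zero]
      have hg₂j₂ : g₂ j₂ ≠ 0 := by rw [hg₂app]; exact sub_ne_zero_of_ne hy
      have hsupp₂ : g₂.support ⊆ g.support.erase j₁ := by
        intro j hj
        rw [Finsupp.mem_support_iff] at hj
        rw [Finset.mem_erase]
        constructor
        · rintro rfl
          apply hj
          rw [hg₂app, hg₁j₁, mul_one, one_mul, sub_self]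
        · apply hsupp₁
          rw [Finsupp.mem_support_iff]
          intro h0
          apply hj
          rw [hg₂app, h0, mul_zero, zero_mul, sub_self]
      have hlt : g₂.support.card < n := by
        calc g₂.support.card ≤ (g.support.erase j₁).card := Finset.card_le_card hsupp₂
          _ < g.support.card := Finset.card_erase_lt_of_mem hj₁
          _ = n := hcard
      have := IH _ hlt g₂ rfl hFg₂
      rw [this] at hg₂j₂
      exact hg₂j₂ rfl



set_option maxHeartbeats 1000000 in

/-- For `i = 1, 2`, let `Bᵢ` be a finite-dimensional simple `ℚ`-algebra whose
center `Kᵢ` is a field, with `dim_{K₁} B₁ = dim_{K₂} B₂ = m ^ 2` for a positive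
integer `m`.  If `φ : B₁ → B₂` is an injective `ℚ`-algebra homomorphism, then
`φ` maps the center of `B₁` into the center of `B₂`. -/
theorem injective_algHom_maps_center_into_center
    (B₁ B₂ : Type*) [Ring B₁] [Ring B₂] [Algebra ℚ B₁] [Algebra ℚ B₂]
    [FiniteDimensional ℚ B₁] [FiniteDimensional ℚ B₂]
    [IsSimpleRing B₁] [IsSimpleRing B₂]
    (hK₁ : IsField (Subalgebra.center ℚ B₁))
    (hK₂ : IsField (Subalgebra.center ℚ B₂))
    (m : ℕ) (hm : 0 < m)
    (hd₁ : Module.finrank (Subalgebra.center ℚ B₁) B₁ = m ^ 2)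
    (hd₂ : Module.finrank (Subalgebra.center ℚ B₂) B₂ = m ^ 2)
    (φ : B₁ →ₐ[ℚ] B₂) (hφ : Function.Injective φ) :
    ∀ x ∈ Subalgebra.center ℚ B₁, φ x ∈ Subalgebra.center ℚ B₂ := by
  intro x hx

  classical
  letI : Field (Subalgebra.center ℚ B₁) := hK₁.toField
  letI : Field (Subalgebra.center ℚ B₂) := hK₂.toField
  set L : Subalgebra ℚ B₂ :=
    Subalgebra.center ℚ B₂ ⊔ (Subalgebra.center ℚ B₁).map φ with hLdef
  have hφK : ∀ k : Subalgebra.center ℚ B₁, φ ↑k ∈ L :=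
    fun k => (le_sup_right : _ ≤ L) (Subalgebra.mem_map.mpr ⟨↑k, k.2, rfl⟩)
  have hK₂L : Subalgebra.center ℚ B₂ ≤ L := le_sup_left
  -- everything in L commutes with the image of φ
  have hcomm : ∀ (b : B₁) (c : B₂), c ∈ L → φ b * c = c * φ b := by
    have hL : L ≤ Subalgebra.centralizer ℚ (Set.range ⇑φ) := by
      apply sup_le
      · intro c hc
        rw [Subalgebra.mem_centralizer_iff]
        rintro _ ⟨b, rfl⟩
        exact Subalgebra.mem_center_iff.mp hc (φ b)
      · rintro _ ⟨k, hk, rfl⟩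
        rw [Subalgebra.mem_centralizer_iff]
        rintro _ ⟨b, rfl⟩
        show φ b * φ k = φ k * φ b
        rw [← map_mul, ← map_mul, Subalgebra.mem_center_iff.mp hk b]
    intro b c hc
    exact Subalgebra.mem_centralizer_iff ℚ |>.mp (hL hc) (φ b) ⟨b, rfl⟩
  -- `L` as a `K₁ := center ℚ B₁`-algebra via `φ`
  let ρ : (Subalgebra.center ℚ B₁) →+* L :=
    RingHom.codRestrict (φ.toRingHom.comp (Subalgebra.center ℚ B₁).val.toRingHom) _
      (fun k => hφK k)
  letI : Algebra (Subalgebra.center ℚ B₁) L :=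
    RingHom.toAlgebra' ρ (fun k lx => Subtype.ext (hcomm ↑k ↑lx lx.2))
  letI : IsScalarTower ℚ (Subalgebra.center ℚ B₁) L := by
    constructor
    intro q k lx
    apply Subtype.ext
    show φ ↑(q • k) * (lx : B₂) = q • (φ ↑k * (lx : B₂))
    rw [Subalgebra.coe_smul, map_smul, smul_mul_assoc]
  haveI : FiniteDimensional ℚ L :=
    FiniteDimensional.of_injective L.val.toLinearMap Subtype.val_injective
  haveI : FiniteDimensional (Subalgebra.center ℚ B₁) L :=
    FiniteDimensional.right ℚ _ _
  set d := Module.finrank (Subalgebra.center ℚ B₁) L with hd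
  let bL : Module.Basis (Fin d) (Subalgebra.center ℚ B₁) L :=
    Module.finBasis _ _
  have hind : ∀ z : Fin d →₀ (Subalgebra.center ℚ B₁),
      (z.sum fun j zj => φ.toRingHom ((Subalgebra.center ℚ B₁).val.toRingHom zj)
        * ((bL j : L) : B₂)) = 0 → z = 0 := by
    intro z hz
    have hsm : ∀ (zj : Subalgebra.center ℚ B₁) (j : Fin d),
        ((zj • bL j : L) : B₂) = φ ↑zj * ((bL j : L) : B₂) := by
      intro zj j
      rw [Algebra.smul_def]
      rfl
    have hcoe : ((z.sum fun j zj => zj • bL j : L) : B₂)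
        = z.sum fun j zj => φ ↑zj * ((bL j : L) : B₂) := by
      show L.val (z.sum fun j zj => zj • bL j) = _
      rw [map_finsuppSum L.val]
      exact Finsupp.sum_congr fun j _ => hsm _ j
    have hzero : (z.sum fun j zj => zj • bL j : L) = 0 := by
      apply Subtype.ext
      rw [hcoe]
      exact hz
    have := linearIndependent_iff.mp bL.linearIndependent z
    rw [Finsupp.linearCombination_apply] at this
    exact this hzero
  have hkey := key_indep (K := Subalgebra.center ℚ B₁) (S := B₁) (R := B₂) (J := Fin d)
    (Subalgebra.center ℚ B₁).val.toRingHom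
    (fun y hy => ⟨⟨y, Subalgebra.mem_center_iff.mpr hy⟩, rfl⟩)
    φ.toRingHom (fun j => ((bL j : L) : B₂))
    (fun s j => hcomm s _ (bL j).2)
    hind
  let Flin : (Fin d →₀ B₁) →ₗ[ℚ] B₂ :=
    Finsupp.lsum ℚ fun j => (LinearMap.mulRight ℚ (((bL j : L) : B₂))).comp φ.toLinearMap
  have hFlin : ∀ g : Fin d →₀ B₁, Flin g = g.sum fun j s => φ s * ((bL j : L) : B₂) :=
    fun g => rfl
  have hkey' : ∀ g : Fin d →₀ B₁,
      (g.sum fun j s => φ s * ((bL j : L) : B₂)) = 0 → g = 0 := hkey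
  have hFinj : Function.Injective Flin := by
    rw [← LinearMap.ker_eq_bot]
    apply LinearMap.ker_eq_bot'.mpr
    intro g hg
    exact hkey' g ((hFlin g).symm.trans hg)
  have hle : Module.finrank ℚ (Fin d →₀ B₁) ≤ Module.finrank ℚ B₂ :=
    LinearMap.finrank_le_finrank_of_injective hFinj
  have hfr : Module.finrank ℚ (Fin d →₀ B₁) = d * Module.finrank ℚ B₁ := by
    rw [(Finsupp.linearEquivFunOnFinite ℚ B₁ (Fin d)).finrank_eq,
      Module.finrank_pi_fintype ℚ, Finset.sum_const, Finset.card_univ, Fintype.card_fin,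
      smul_eq_mul]
  have ht₁ : Module.finrank ℚ (Subalgebra.center ℚ B₁) * Module.finrank (Subalgebra.center ℚ B₁) B₁
      = Module.finrank ℚ B₁ := Module.finrank_mul_finrank _ _ _
  have ht₂ : Module.finrank ℚ (Subalgebra.center ℚ B₂) * Module.finrank (Subalgebra.center ℚ B₂) B₂
      = Module.finrank ℚ B₂ := Module.finrank_mul_finrank _ _ _
  have htL : Module.finrank ℚ (Subalgebra.center ℚ B₁) * d = Module.finrank ℚ L :=
    Module.finrank_mul_finrank _ _ _
  have hLle : Module.finrank ℚ L ≤ Module.finrank ℚ (Subalgebra.center ℚ B₂) := by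
    have h1 : Module.finrank ℚ L * m ^ 2
        ≤ Module.finrank ℚ (Subalgebra.center ℚ B₂) * m ^ 2 := by
      calc Module.finrank ℚ L * m ^ 2
          = d * Module.finrank ℚ B₁ := by
            rw [← htL, ← ht₁, hd₁]; ring
        _ ≤ Module.finrank ℚ B₂ := by rw [← hfr]; exact hle
        _ = Module.finrank ℚ (Subalgebra.center ℚ B₂) * m ^ 2 := by rw [← ht₂, hd₂]
    exact Nat.le_of_mul_le_mul_right h1 (pow_pos hm 2)
  have hsub : Subalgebra.toSubmodule (Subalgebra.center ℚ B₂) = Subalgebra.toSubmodule L := by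
    apply Submodule.eq_of_le_of_finrank_le
    · exact fun y hy => hK₂L hy
    · exact hLle
  have hxL : φ x ∈ Subalgebra.toSubmodule L := hφK ⟨x, hx⟩
  rw [← hsub] at hxL
  exact hxL
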